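/- Let M, N be n×n matrices with A = M + N invertible, α > 0, ω ∈ [0,2), and assume H = αI + M, S = αI + N, H + F_H and S + F_S are all invertible. Define J_S = (S+F_S)⁻¹S − I and P_H = H(H+F_H)⁻¹ − I, and let E = (I+J_S)S⁻¹H⁻¹P_H·A + J_S·S⁻¹H⁻¹·A. Then both of the following bounds hold: (i) ‖E‖ ≤ ((1+‖J_S‖)·κ(HS)·‖P_H‖ + ‖J_S‖)·c_F/(α(2−ω)), where HS is the product matrix; and (ii) ‖E‖ ≤ ((1+‖J_S‖)·‖P_H‖ + ‖J_S‖)·c_F·κ(A)/(α(2−ω)), where c_F = ‖I − T_F(α,ω)‖. -/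

import Mathlib

set_option synthInstance.maxHeartbeats 1000000
set_option maxHeartbeats 2000000

open Matrix

/-- The spectral (operator 2-)norm of a real matrix. -/
noncomputable def specNorm {n : ℕ} (A : Matrix (Fin n) (Fin n) ℝ) : ℝ :=
  ‖Matrix.toEuclideanCLM (𝕜 := ℝ) A‖

/-- The (2-norm) condition number `κ(B) = ‖B‖‖B⁻¹‖`. -/
noncomputable def condNum {n : ℕ} (A : Matrix (Fin n) (Fin n) ℝ) : ℝ :=
  specNorm A * specNorm A⁻¹

/-- The GADI iteration matrix `T_F(α,ω) = S⁻¹ H⁻¹ (α² I + M N − (1−ω) α A)`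
with `A = M + N`, `H = α I + M`, `S = α I + N`. -/
noncomputable def gadiTF {n : ℕ} (M N : Matrix (Fin n) (Fin n) ℝ) (α ω : ℝ) :
    Matrix (Fin n) (Fin n) ℝ :=
  (α • 1 + N)⁻¹ * (α • 1 + M)⁻¹ * ((α ^ 2) • 1 + M * N - ((1 - ω) * α) • (M + N))

lemma specNorm_nonneg {n : ℕ} (A : Matrix (Fin n) (Fin n) ℝ) : 0 ≤ specNorm A :=
  norm_nonneg _

lemma specNorm_mul_le {n : ℕ} (A B : Matrix (Fin n) (Fin n) ℝ) :
    specNorm (A * B) ≤ specNorm A * specNorm B := by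
  unfold specNorm; rw [_root_.map_mul]; exact norm_mul_le _ _

lemma specNorm_add_le {n : ℕ} (A B : Matrix (Fin n) (Fin n) ℝ) :
    specNorm (A + B) ≤ specNorm A + specNorm B := by
  unfold specNorm; rw [_root_.map_add]; exact norm_add_le _ _

lemma specNorm_smul {n : ℕ} (r : ℝ) (A : Matrix (Fin n) (Fin n) ℝ) :
    specNorm (r • A) = |r| * specNorm A := by
  unfold specNorm
  rw [_root_.map_smul]
  have := norm_smul r (Matrix.toEuclideanCLM (𝕜 := ℝ) A)
  simpa [Real.norm_eq_abs] using this

lemma specNorm_one_le {n : ℕ} : specNorm (1 : Matrix (Fin n) (Fin n) ℝ) ≤ 1 := by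
  unfold specNorm; rw [_root_.map_one]
  simpa [ContinuousLinearMap.one_def] using
    (ContinuousLinearMap.norm_id_le (E := EuclideanSpace ℝ (Fin n)))

lemma specNorm_mul3_le {n : ℕ} (X Y Z : Matrix (Fin n) (Fin n) ℝ) :
    specNorm (X * (Y * Z)) ≤ specNorm X * (specNorm Y * specNorm Z) :=
  (specNorm_mul_le _ _).trans
    (mul_le_mul_of_nonneg_left (specNorm_mul_le _ _) (specNorm_nonneg _))

lemma specNorm_mul4_le {n : ℕ} (X Y Z W : Matrix (Fin n) (Fin n) ℝ) :
    specNorm (X * (Y * (Z * W))) ≤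
      specNorm X * (specNorm Y * (specNorm Z * specNorm W)) :=
  (specNorm_mul_le _ _).trans
    (mul_le_mul_of_nonneg_left (specNorm_mul3_le _ _ _) (specNorm_nonneg _))

lemma specNorm_mul5_le {n : ℕ} (X Y Z W V : Matrix (Fin n) (Fin n) ℝ) :
    specNorm (X * (Y * (Z * (W * V)))) ≤
      specNorm X * (specNorm Y * (specNorm Z * (specNorm W * specNorm V))) :=
  (specNorm_mul_le _ _).trans
    (mul_le_mul_of_nonneg_left (specNorm_mul4_le _ _ _ _) (specNorm_nonneg _))

/-- **Perturbation-term bounds via `κ(HS)` and via `κ(A)` (cf. (3.10), (3.11)).**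
With `E = (I+J_S)S⁻¹H⁻¹P_H A + J_S S⁻¹H⁻¹ A`:
(i) `‖E‖ ≤ ((1+‖J_S‖)κ(HS)‖P_H‖ + ‖J_S‖) c_F/(α(2−ω))`, and
(ii) `‖E‖ ≤ ((1+‖J_S‖)‖P_H‖ + ‖J_S‖) c_F κ(A)/(α(2−ω))`, with `c_F = ‖I − T_F(α,ω)‖`. -/
theorem perturbation_term_bounds {n : ℕ}
    (M N A H S F_H F_S : Matrix (Fin n) (Fin n) ℝ) (hA : A = M + N)
    (α ω : ℝ) (hα : 0 < α) (hω : ω ∈ Set.Ico (0 : ℝ) 2)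
    (hH : H = α • 1 + M) (hS : S = α • 1 + N)
    (hAinv : IsUnit A.det) (hHinv : IsUnit H.det) (hSinv : IsUnit S.det)
    (hHFinv : IsUnit (H + F_H).det) (hSFinv : IsUnit (S + F_S).det)
    (J_S P_H E : Matrix (Fin n) (Fin n) ℝ)
    (hJS : J_S = (S + F_S)⁻¹ * S - 1) (hPH : P_H = H * (H + F_H)⁻¹ - 1)
    (hE : E = (1 + J_S) * S⁻¹ * H⁻¹ * P_H * A + J_S * S⁻¹ * H⁻¹ * A) :
    specNorm E ≤
      ((1 + specNorm J_S) * condNum (H * S) * specNorm P_H + specNorm J_S) *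
        (specNorm (1 - gadiTF M N α ω) / (α * (2 - ω))) ∧
    specNorm E ≤
      ((1 + specNorm J_S) * specNorm P_H + specNorm J_S) *
        (specNorm (1 - gadiTF M N α ω) * condNum A / (α * (2 - ω))) := by
  have h1 : H⁻¹ * H = 1 := Matrix.nonsing_inv_mul H hHinv
  have h3 : H * H⁻¹ = 1 := Matrix.mul_nonsing_inv H hHinv
  have h4 : S * S⁻¹ = 1 := Matrix.mul_nonsing_inv S hSinv
  have h5 : A * A⁻¹ = 1 := Matrix.mul_nonsing_inv A hAinv
  have h2 : S⁻¹ * S = 1 := Matrix.nonsing_inv_mul S hSinv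
  have hpos : (0 : ℝ) < α * (2 - ω) := by
    have := hω.2; have := hω.1; nlinarith
  -- the key matrix identity
  have hHS : H * S = (α ^ 2) • (1 : Matrix (Fin n) (Fin n) ℝ) + M * N + α • A := by
    rw [hH, hS, hA]
    simp only [add_mul, mul_add, Matrix.smul_mul, Matrix.mul_smul, mul_one, one_mul,
      smul_add, smul_smul]
    module
  have hT : gadiTF M N α ω =
      S⁻¹ * (H⁻¹ * ((α ^ 2) • 1 + M * N - ((1 - ω) * α) • A)) := by
    rw [gadiTF, ← hH, ← hS, ← hA, mul_assoc]
  have key : (1 : Matrix (Fin n) (Fin n) ℝ) - gadiTF M N α ω =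
      (α * (2 - ω)) • (S⁻¹ * (H⁻¹ * A)) := by
    have hone : S⁻¹ * (H⁻¹ * (H * S)) = 1 := by
      rw [← mul_assoc H⁻¹, h1, one_mul, h2]
    calc (1 : Matrix (Fin n) (Fin n) ℝ) - gadiTF M N α ω
        = S⁻¹ * (H⁻¹ * (H * S)) -
            S⁻¹ * (H⁻¹ * ((α ^ 2) • 1 + M * N - ((1 - ω) * α) • A)) := by
          rw [hone, hT]
      _ = S⁻¹ * (H⁻¹ * (H * S - ((α ^ 2) • 1 + M * N - ((1 - ω) * α) • A))) := by
          simp only [mul_sub, Matrix.mul_smul]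
      _ = S⁻¹ * (H⁻¹ * ((α * (2 - ω)) • A)) := by
          rw [hHS]
          congr 2
          module
      _ = (α * (2 - ω)) • (S⁻¹ * (H⁻¹ * A)) := by
          rw [Matrix.mul_smul, Matrix.mul_smul]
  set c := specNorm (S⁻¹ * (H⁻¹ * A)) with hc
  have hnorm : specNorm (1 - gadiTF M N α ω) = (α * (2 - ω)) * c := by
    rw [key, specNorm_smul, abs_of_pos hpos]
  have hq1 : specNorm (1 - gadiTF M N α ω) / (α * (2 - ω)) = c := by
    rw [hnorm, div_eq_iff hpos.ne']; ring
  have hq2 : specNorm (1 - gadiTF M N α ω) * condNum A / (α * (2 - ω)) =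
      condNum A * c := by
    rw [hnorm, div_eq_iff hpos.ne']; ring
  -- abbreviations for the norms
  have jj0 : 0 ≤ specNorm J_S := specNorm_nonneg _
  have pp0 : 0 ≤ specNorm P_H := specNorm_nonneg _
  have c0 : 0 ≤ c := specNorm_nonneg _
  have a0 : 0 ≤ specNorm A := specNorm_nonneg _
  have ai0 : 0 ≤ specNorm A⁻¹ := specNorm_nonneg _
  have hs0 : 0 ≤ specNorm (H * S) := specNorm_nonneg _
  have hsi0 : 0 ≤ specNorm (H * S)⁻¹ := specNorm_nonneg _
  have hu : specNorm (1 + J_S) ≤ 1 + specNorm J_S :=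
    (specNorm_add_le _ _).trans (by linarith [specNorm_one_le (n := n)])
  have hu0 : 0 ≤ specNorm (1 + J_S) := specNorm_nonneg _
  -- ‖A‖ ≤ ‖HS‖ c
  have hAid : (H * S) * (S⁻¹ * (H⁻¹ * A)) = A := by
    have : (H * S) * (S⁻¹ * (H⁻¹ * A)) = H * (S * S⁻¹) * (H⁻¹ * A) := by
      noncomm_ring
    rw [this, h4, mul_one, ← mul_assoc, h3, one_mul]
  have hAle : specNorm A ≤ specNorm (H * S) * c := by
    calc specNorm A = specNorm ((H * S) * (S⁻¹ * (H⁻¹ * A))) := by rw [hAid]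
      _ ≤ specNorm (H * S) * c := specNorm_mul_le _ _
  -- c ≤ ‖A‖ ‖A⁻¹‖ c
  have hcid : A * (A⁻¹ * (S⁻¹ * (H⁻¹ * A))) = S⁻¹ * (H⁻¹ * A) := by
    rw [← mul_assoc, h5, one_mul]
  have hcle : c ≤ specNorm A * (specNorm A⁻¹ * c) := by
    calc c = specNorm (A * (A⁻¹ * (S⁻¹ * (H⁻¹ * A)))) := by rw [hcid]
      _ ≤ specNorm A * (specNorm A⁻¹ * c) := specNorm_mul3_le _ _ _
  -- the second term of E
  have e2 : J_S * S⁻¹ * H⁻¹ * A = J_S * (S⁻¹ * (H⁻¹ * A)) := by noncomm_ring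
  have t2 : specNorm (J_S * S⁻¹ * H⁻¹ * A) ≤ specNorm J_S * c := by
    rw [e2]; exact specNorm_mul_le _ _
  constructor
  · -- bound (i), via κ(HS)
    have e1 : (1 + J_S) * S⁻¹ * H⁻¹ * P_H * A =
        (1 + J_S) * ((H * S)⁻¹ * (P_H * A)) := by
      rw [Matrix.mul_inv_rev]; noncomm_ring
    have t1 : specNorm ((1 + J_S) * S⁻¹ * H⁻¹ * P_H * A) ≤
        specNorm (1 + J_S) *
          (specNorm (H * S)⁻¹ * (specNorm P_H * specNorm A)) := by
      rw [e1]; exact specNorm_mul4_le _ _ _ _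
    have step : specNorm E ≤
        specNorm ((1 + J_S) * S⁻¹ * H⁻¹ * P_H * A) +
          specNorm (J_S * S⁻¹ * H⁻¹ * A) := by
      rw [hE]; exact specNorm_add_le _ _
    rw [hq1]
    have s1 : specNorm (1 + J_S) *
        (specNorm (H * S)⁻¹ * (specNorm P_H * specNorm A)) ≤
        (1 + specNorm J_S) *
          (specNorm (H * S)⁻¹ * (specNorm P_H * (specNorm (H * S) * c))) := by
      have inner : specNorm (H * S)⁻¹ * (specNorm P_H * specNorm A) ≤
          specNorm (H * S)⁻¹ * (specNorm P_H * (specNorm (H * S) * c)) := by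
        apply mul_le_mul_of_nonneg_left _ hsi0
        exact mul_le_mul_of_nonneg_left hAle pp0
      exact mul_le_mul hu inner (by positivity) (by linarith)
    calc specNorm E ≤ _ + _ := step
      _ ≤ (1 + specNorm J_S) *
            (specNorm (H * S)⁻¹ * (specNorm P_H * (specNorm (H * S) * c))) +
            specNorm J_S * c := add_le_add (t1.trans s1) t2
      _ = ((1 + specNorm J_S) * condNum (H * S) * specNorm P_H + specNorm J_S) * c := by
          rw [condNum]; ring
  · -- bound (ii), via κ(A)
    have e3 : (1 + J_S) * S⁻¹ * H⁻¹ * P_H * A =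
        (1 + J_S) * ((S⁻¹ * (H⁻¹ * A)) * (A⁻¹ * (P_H * A))) := by
      have : (S⁻¹ * (H⁻¹ * A)) * (A⁻¹ * (P_H * A)) =
          S⁻¹ * (H⁻¹ * ((A * A⁻¹) * (P_H * A))) := by noncomm_ring
      rw [this, h5, one_mul]; noncomm_ring
    have t1 : specNorm ((1 + J_S) * S⁻¹ * H⁻¹ * P_H * A) ≤
        specNorm (1 + J_S) *
          (c * (specNorm A⁻¹ * (specNorm P_H * specNorm A))) := by
      rw [e3]; exact specNorm_mul5_le _ _ _ _ _
    have step : specNorm E ≤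
        specNorm ((1 + J_S) * S⁻¹ * H⁻¹ * P_H * A) +
          specNorm (J_S * S⁻¹ * H⁻¹ * A) := by
      rw [hE]; exact specNorm_add_le _ _
    rw [hq2]
    have s1 : specNorm (1 + J_S) *
        (c * (specNorm A⁻¹ * (specNorm P_H * specNorm A))) ≤
        (1 + specNorm J_S) *
          (c * (specNorm A⁻¹ * (specNorm P_H * specNorm A))) :=
      mul_le_mul_of_nonneg_right hu (by positivity)
    have s2 : specNorm J_S * c ≤ specNorm J_S * (specNorm A * (specNorm A⁻¹ * c)) :=
      mul_le_mul_of_nonneg_left hcle jj0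
    calc specNorm E ≤ _ + _ := step
      _ ≤ (1 + specNorm J_S) *
            (c * (specNorm A⁻¹ * (specNorm P_H * specNorm A))) +
            specNorm J_S * (specNorm A * (specNorm A⁻¹ * c)) :=
          add_le_add (t1.trans s1) (t2.trans s2)
      _ = ((1 + specNorm J_S) * specNorm P_H + specNorm J_S) * (condNum A * c) := by
          rw [condNum]; ring
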